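/- arXiv:1901.03917 — 2 statements merged into one kernel-verified Lean document; each statement's English description precedes it below -/
import Mathlib

section
/- The Bubble-sort graph BS_5 (on the 120 permutations of {1,…,5}) contains a Hamiltonian cycle. -/
set_option maxRecDepth 100000
set_option maxHeartbeats 1000000

/-- The adjacent transposition `b_i` (1-indexed, swapping positions `i` and `i+1`,
i.e. the 0-indexed positions `i-1` and `i` of `Fin n`), extended by `1` outside
the valid range `1 ≤ i ≤ n-1`. -/
def bsGen (n i : ℕ) : Equiv.Perm (Fin n) :=
  if h : 0 < i ∧ i < n then
    Equiv.swap ⟨i - 1, lt_of_le_of_lt (Nat.pred_le i) h.2⟩ ⟨i, h.2⟩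
  else 1

theorem bsGen_ne_one (n i : ℕ) (h1 : 0 < i) (h2 : i < n) : bsGen n i ≠ 1 := by
  rw [bsGen, dif_pos ⟨h1, h2⟩]
  intro h
  have h' := congrArg Fin.val (Equiv.swap_eq_one_iff.mp h)
  simp at h'
  omega

theorem bsGen_mul_self (n i : ℕ) : bsGen n i * bsGen n i = 1 := by
  rw [bsGen]; split
  · exact Equiv.swap_mul_self _ _
  · simp

/-- The Bubble-sort graph `BS_n` on the symmetric group `Sym_n = Equiv.Perm (Fin n)`:
`π` and `τ` are adjacent iff `τ = π * b_i` for some `1 ≤ i ≤ n-1`. -/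
def BS (n : ℕ) : SimpleGraph (Equiv.Perm (Fin n)) where
  Adj π τ := ∃ i, 0 < i ∧ i < n ∧ τ = π * bsGen n i
  symm := by
    constructor
    rintro π τ ⟨i, h1, h2, rfl⟩
    exact ⟨i, h1, h2, by rw [mul_assoc, bsGen_mul_self, mul_one]⟩
  loopless := by
    constructor
    rintro π ⟨i, h1, h2, h⟩
    exact bsGen_ne_one n i h1 h2 (left_eq_mul.mp h)

/-- The Steinhaus–Johnson–Trotter sequence of adjacent-swap positions for `n = 5`,
closed into a cycle by a final swap at position `1`. -/
def sjtL : List ℕ := [4, 3, 2, 1, 4, 1, 2, 3, 4, 2, 4, 3, 2, 1, 2, 1, 2, 3, 4, 3, 4, 3, 2, 1, 2, 1, 2, 3, 4, 2, 4, 3, 2, 1, 4, 1, 2, 3, 4, 1, 4, 3, 2, 1, 4, 1, 2, 3, 4, 2, 4, 3, 2, 1, 2, 1, 2, 3, 4, 3, 4, 3, 2, 1, 2, 1, 2, 3, 4, 2, 4, 3, 2, 1, 4, 1, 2, 3, 4, 1, 4, 3, 2, 1, 4, 1, 2, 3, 4, 2, 4, 3, 2, 1, 2, 1, 2, 3, 4,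 3, 4, 3, 2, 1, 2, 1, 2, 3, 4, 2, 4, 3, 2, 1, 4, 1, 2, 3, 4, 1]

theorem sjtL_valid : ∀ i ∈ sjtL, 0 < i ∧ i < 5 := by decide

/-- One step of the walk: right-multiply by a generator. -/
def stepMul (τ : Equiv.Perm (Fin 5)) (i : ℕ) : Equiv.Perm (Fin 5) := τ * bsGen 5 i

theorem bs_adj_step (π : Equiv.Perm (Fin 5)) (i : ℕ) (h1 : 0 < i) (h2 : i < 5) :
    (BS 5).Adj π (π * bsGen 5 i) := ⟨i, h1, h2, rfl⟩

/-- Build a walk in `BS 5` from a list of valid generator indices. -/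
def mkWalk : (L : List ℕ) → (π : Equiv.Perm (Fin 5)) → (∀ i ∈ L, 0 < i ∧ i < 5) →
    (BS 5).Walk π (L.foldl stepMul π)
  | [], _, _ => SimpleGraph.Walk.nil
  | i :: t, π, h =>
    SimpleGraph.Walk.cons
      (bs_adj_step π i (h i List.mem_cons_self).1 (h i List.mem_cons_self).2)
      (mkWalk t (π * bsGen 5 i) (fun j hj => h j (List.mem_cons_of_mem _ hj)))

/-- Numeric encoding of permutations (injective, though we never need that). -/
def encP (p : Equiv.Perm (Fin 5)) : ℕ :=
  (p 0).val + 5 * (p 1).val + 25 * (p 2).val + 125 * (p 3).val + 625 * (p 4).val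

/-- Numeric encoding of unordered pairs of permutations. -/
def encE : Sym2 (Equiv.Perm (Fin 5)) → ℕ :=
  Sym2.lift ⟨fun a b => min (encP a) (encP b) * 5000 + max (encP a) (encP b),
    fun a b => by dsimp; rw [min_comm, max_comm]⟩

/-- The edges of a vertex list (consecutive unordered pairs). -/
def edgesOf : List (Equiv.Perm (Fin 5)) → List (Sym2 (Equiv.Perm (Fin 5)))
  | a :: b :: t => s(a, b) :: edgesOf (b :: t)
  | _ => []

theorem mkWalk_support (L : List ℕ) (π : Equiv.Perm (Fin 5)) (h : ∀ i ∈ L, 0 < i ∧ i < 5) :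
    (mkWalk L π h).support = L.scanl stepMul π := by
  induction L generalizing π with
  | nil => simp [mkWalk]
  | cons i t ih => simp [mkWalk, List.scanl_cons, ih, stepMul]

theorem mkWalk_length (L : List ℕ) (π : Equiv.Perm (Fin 5)) (h : ∀ i ∈ L, 0 < i ∧ i < 5) :
    (mkWalk L π h).length = L.length := by
  induction L generalizing π with
  | nil => simp [mkWalk]
  | cons i t ih => simp [mkWalk, ih, stepMul]

theorem edgesOf_scanl_cons (a b : Equiv.Perm (Fin 5))
    (f : Equiv.Perm (Fin 5) → ℕ → Equiv.Perm (Fin 5)) (t : List ℕ) :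
    edgesOf (a :: List.scanl f b t) = s(a, b) :: edgesOf (List.scanl f b t) := by
  cases t <;> simp only [List.scanl_cons, List.scanl_nil] <;> rfl

theorem mkWalk_edges (L : List ℕ) (π : Equiv.Perm (Fin 5)) (h : ∀ i ∈ L, 0 < i ∧ i < 5) :
    (mkWalk L π h).edges = edgesOf (L.scanl stepMul π) := by
  induction L generalizing π with
  | nil => simp [mkWalk, List.scanl, edgesOf]
  | cons i t ih =>
    simp only [mkWalk, SimpleGraph.Walk.edges_cons, ih, List.scanl_cons, edgesOf_scanl_cons, stepMul]
    exact (SimpleGraph.Walk.edges_cons _ _).trans (congrArg _ (ih _ _))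

theorem support_nodup_key : (((sjtL.scanl stepMul 1).tail).map encP).Nodup := by decide

theorem edges_nodup_key : ((edgesOf (sjtL.scanl stepMul 1)).map encE).Nodup := by decide

/-- the Bubble-sort graph `BS_5` contains a Hamiltonian cycle. -/
theorem bs_five_hamiltonian_cycle :
    ∃ (π : Equiv.Perm (Fin 5)) (w : (BS 5).Walk π π), w.IsHamiltonianCycle := by
  have hend : sjtL.foldl stepMul 1 = 1 := by decide
  set w0 := mkWalk sjtL 1 sjtL_valid with hw0
  have hs : w0.support = sjtL.scanl stepMul 1 := mkWalk_support _ _ _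
  have he : w0.edges = edgesOf (sjtL.scanl stepMul 1) := mkWalk_edges _ _ _
  have hlen : w0.length = 120 := by rw [mkWalk_length]; decide
  have htailnd : w0.support.tail.Nodup := by
    rw [hs]; exact support_nodup_key.of_map _
  have hednd : w0.edges.Nodup := by
    rw [he]; exact edges_nodup_key.of_map _
  have htlen : w0.support.tail.length = 120 := by
    rw [hs, List.length_tail, List.length_scanl]; decide
  have hcard : Fintype.card (Equiv.Perm (Fin 5)) = 120 := by
    rw [Fintype.card_perm, Fintype.card_fin]; rfl
  have hmem : ∀ a : Equiv.Perm (Fin 5), a ∈ w0.support.tail := by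
    intro a
    have h1 : w0.support.tail.toFinset.card = 120 := by
      rw [List.toFinset_card_of_nodup htailnd, htlen]
    have h2 : w0.support.tail.toFinset = Finset.univ :=
      Finset.eq_univ_of_card _ (by rw [h1, hcard])
    rw [← List.mem_toFinset, h2]
    exact Finset.mem_univ a
  refine ⟨1, w0.copy rfl hend, ?_⟩
  rw [SimpleGraph.Walk.isHamiltonianCycle_iff_isCycle_and_support_count_tail_eq_one]
  constructor
  · rw [SimpleGraph.Walk.isCycle_def]
    refine ⟨⟨?_⟩, ?_, ?_⟩
    · rw [SimpleGraph.Walk.edges_copy]; exact hednd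
    · intro h
      have h0 : (w0.copy rfl hend).length = 0 := by rw [h]; rfl
      rw [SimpleGraph.Walk.length_copy, hlen] at h0
      exact absurd h0 (by norm_num)
    · rw [SimpleGraph.Walk.support_copy]; exact htailnd
  · intro a
    rw [SimpleGraph.Walk.support_copy]
    exact List.count_eq_one_of_mem htailnd (hmem a)
end

section
/- Let n ≥ 5. For each 2-element subset S of {1, …, n}, let V_S = {π ∈ Sym_n : {π(n−1), π(n)} = S}. Then for distinct 2-element subsets S and T, there exists an edge of the Bubble-sort graph BS_n with one endpoint in V_S and the other in V_T if and only if |S ∩ T| = 1, and every such edge is a b_{n−2}-edge; consequently the factor graph of BS_n with respect to the partition {V_S} is isomorphic to the Johnson graph J(n, 2), whose vertices are the 2-element subsets of {1, …, n} with S adjacent to T iff |S ∩ T| = 1. -/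
lemma bs_key (n : ℕ) (hn : 5 ≤ n) (S T : Finset (Fin n)) (hS : S.card = 2)
    (hT : T.card = 2) (hST : S ≠ T) :
    ((∃ π τ : Equiv.Perm (Fin n),
        ({π ⟨n - 2, by omega⟩, π ⟨n - 1, by omega⟩} : Finset (Fin n)) = S ∧
        ({τ ⟨n - 2, by omega⟩, τ ⟨n - 1, by omega⟩} : Finset (Fin n)) = T ∧
        (BS n).Adj π τ) ↔ (S ∩ T).card = 1) ∧
    (∀ π τ : Equiv.Perm (Fin n),
        ({π ⟨n - 2, by omega⟩, π ⟨n - 1, by omega⟩} : Finset (Fin n)) = S →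
        ({τ ⟨n - 2, by omega⟩, τ ⟨n - 1, by omega⟩} : Finset (Fin n)) = T →
        (BS n).Adj π τ → τ = π * bsGen n (n - 2)) := by
  have hN3 : n - 3 < n := by omega
  have hN2 : n - 2 < n := by omega
  have hN1 : n - 1 < n := by omega
  set N3 : Fin n := ⟨n - 3, hN3⟩ with hN3def
  set N2 : Fin n := ⟨n - 2, hN2⟩ with hN2def
  set N1 : Fin n := ⟨n - 1, hN1⟩ with hN1def
  have ne32 : N3 ≠ N2 := by simp [hN3def, hN2def, Fin.ext_iff]; omega
  have ne31 : N3 ≠ N1 := by simp [hN3def, hN1def, Fin.ext_iff]; omega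
  have ne21 : N2 ≠ N1 := by simp [hN2def, hN1def, Fin.ext_iff]; omega
  have hbs : bsGen n (n - 2) = Equiv.swap N3 N2 := by
    rw [bsGen, dif_pos ⟨by omega, by omega⟩]
    congr 1 <;> simp [Fin.ext_iff, hN3def, hN2def] <;> omega
  -- forcing lemma
  have force : ∀ π τ : Equiv.Perm (Fin n),
      ({π N2, π N1} : Finset (Fin n)) = S →
      ({τ N2, τ N1} : Finset (Fin n)) = T →
      (BS n).Adj π τ → τ = π * bsGen n (n - 2) := by
    rintro π τ hSπ hTτ ⟨i, hi1, hi2, rfl⟩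
    suffices hi : i = n - 2 by rw [hi]
    by_contra hne
    apply hST
    rw [← hSπ, ← hTτ]
    have hb : bsGen n i = Equiv.swap ⟨i - 1, by omega⟩ ⟨i, hi2⟩ := by
      rw [bsGen, dif_pos ⟨hi1, hi2⟩]
    rcases Nat.lt_or_ge i (n - 2) with hlt | hge
    · -- b_i fixes both last positions
      have h2 : (π * bsGen n i) N2 = π N2 := by
        rw [Equiv.Perm.mul_apply, hb,
          Equiv.swap_apply_of_ne_of_ne (by simp [hN2def, Fin.ext_iff]; omega)
            (by simp [hN2def, Fin.ext_iff]; omega)]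
      have h1 : (π * bsGen n i) N1 = π N1 := by
        rw [Equiv.Perm.mul_apply, hb,
          Equiv.swap_apply_of_ne_of_ne (by simp [hN1def, Fin.ext_iff]; omega)
            (by simp [hN1def, Fin.ext_iff]; omega)]
      rw [h1, h2]
    · -- i = n - 1 : b_i swaps the last two positions
      have hi' : i = n - 1 := by omega
      subst hi'
      have e1 : (⟨n - 1 - 1, by omega⟩ : Fin n) = N2 := by
        simp [hN2def, Fin.ext_iff]; omega
      have h2 : (π * bsGen n (n - 1)) N2 = π N1 := by
        rw [Equiv.Perm.mul_apply, hb, e1, Equiv.swap_apply_left]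
      have h1 : (π * bsGen n (n - 1)) N1 = π N2 := by
        rw [Equiv.Perm.mul_apply, hb, e1]
        have : N1 = (⟨n - 1, hi2⟩ : Fin n) := rfl
        rw [this, Equiv.swap_apply_right]
      rw [h1, h2, Finset.pair_comm]
  refine ⟨⟨?_, ?_⟩, force⟩
  · -- forward: existence of edge implies |S ∩ T| = 1
    rintro ⟨π, τ, hSπ, hTτ, hadj⟩
    have hτ := force π τ hSπ hTτ hadj
    subst hτ
    have h2 : (π * bsGen n (n - 2)) N2 = π N3 := by
      rw [Equiv.Perm.mul_apply, hbs, Equiv.swap_apply_right]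
    have h1 : (π * bsGen n (n - 2)) N1 = π N1 := by
      rw [Equiv.Perm.mul_apply, hbs, Equiv.swap_apply_of_ne_of_ne ne31.symm ne21.symm]
    rw [h2, h1] at hTτ
    have key : S ∩ T = {π N1} := by
      ext x
      rw [← hSπ, ← hTτ]
      simp only [Finset.mem_inter, Finset.mem_insert, Finset.mem_singleton]
      constructor
      · rintro ⟨h3 | h3, h4 | h4⟩
        · exact absurd (π.injective (h3.symm.trans h4)) ne32.symm
        · exact h4
        · exact h3
        · exact h3
      · rintro rfl
        exact ⟨Or.inr rfl, Or.inr rfl⟩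
    rw [key, Finset.card_singleton]
  · -- backward: |S ∩ T| = 1 implies existence of edge
    intro hcard
    obtain ⟨c, hc⟩ := Finset.card_eq_one.mp hcard
    have hcS : c ∈ S := (Finset.mem_inter.mp (hc ▸ Finset.mem_singleton_self c)).1
    have hcT : c ∈ T := (Finset.mem_inter.mp (hc ▸ Finset.mem_singleton_self c)).2
    have hSe : (S.erase c).card = 1 := by rw [Finset.card_erase_of_mem hcS, hS]
    have hTe : (T.erase c).card = 1 := by rw [Finset.card_erase_of_mem hcT, hT]
    obtain ⟨a, ha⟩ := Finset.card_eq_one.mp hSe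
    obtain ⟨b, hb⟩ := Finset.card_eq_one.mp hTe
    have haS : a ∈ S.erase c := ha ▸ Finset.mem_singleton_self a
    have hbT : b ∈ T.erase c := hb ▸ Finset.mem_singleton_self b
    have hac : a ≠ c := Finset.ne_of_mem_erase haS
    have hbc : b ≠ c := Finset.ne_of_mem_erase hbT
    have hSeq : S = {c, a} := by
      rw [← Finset.insert_erase hcS, ha]
    have hTeq : T = {c, b} := by
      rw [← Finset.insert_erase hcT, hb]
    have hab : a ≠ b := by
      rintro rfl
      have : a ∈ S ∩ T := Finset.mem_inter.mpr
        ⟨Finset.mem_of_mem_erase haS, Finset.mem_of_mem_erase hbT⟩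
      rw [hc, Finset.mem_singleton] at this
      exact hac this
    -- build π with π N3 = b, π N2 = a, π N1 = c
    set σ1 : Equiv.Perm (Fin n) := Equiv.swap N3 b with hσ1
    set σ2 : Equiv.Perm (Fin n) := Equiv.swap (σ1 N2) a * σ1 with hσ2
    set π : Equiv.Perm (Fin n) := Equiv.swap (σ2 N1) c * σ2 with hπ
    have hs13 : σ1 N3 = b := Equiv.swap_apply_left _ _
    have hs22 : σ2 N2 = a := by
      rw [hσ2, Equiv.Perm.mul_apply, Equiv.swap_apply_left]
    have hs23 : σ2 N3 = b := by
      rw [hσ2, Equiv.Perm.mul_apply, hs13,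
        Equiv.swap_apply_of_ne_of_ne (fun h => ne32 (σ1.injective (hs13.trans h))) hab.symm]
    have hπ1 : π N1 = c := by
      rw [hπ, Equiv.Perm.mul_apply, Equiv.swap_apply_left]
    have hπ2 : π N2 = a := by
      rw [hπ, Equiv.Perm.mul_apply, hs22,
        Equiv.swap_apply_of_ne_of_ne (fun h => ne21 (σ2.injective (hs22.trans h))) hac]
    have hπ3 : π N3 = b := by
      rw [hπ, Equiv.Perm.mul_apply, hs23,
        Equiv.swap_apply_of_ne_of_ne (fun h => ne31 (σ2.injective (hs23.trans h))) hbc]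
    refine ⟨π, π * bsGen n (n - 2), ?_, ?_, ⟨n - 2, by omega, by omega, rfl⟩⟩
    · rw [hπ2, hπ1, hSeq, Finset.pair_comm]
    · have h2 : (π * bsGen n (n - 2)) N2 = π N3 := by
        rw [Equiv.Perm.mul_apply, hbs, Equiv.swap_apply_right]
      have h1 : (π * bsGen n (n - 2)) N1 = π N1 := by
        rw [Equiv.Perm.mul_apply, hbs, Equiv.swap_apply_of_ne_of_ne ne31.symm ne21.symm]
      rw [h2, h1, hπ3, hπ1, hTeq, Finset.pair_comm]

/-- for `n ≥ 5` and distinct 2-element subsets `S, T` of entries, there is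
an edge of `BS_n` between `V_S = {π : {π(n-1), π(n)} = S}` and `V_T` iff `|S ∩ T| = 1`,
every such edge is a `b_{n-2}`-edge, and consequently the factor graph of `BS_n` with
respect to the partition `{V_S}` is isomorphic to the Johnson graph `J(n, 2)`. -/
theorem bs_factor_graph_is_johnson (n : ℕ) (hn : 5 ≤ n) :
    (∀ S T : Finset (Fin n), S.card = 2 → T.card = 2 → S ≠ T →
      ((∃ π τ : Equiv.Perm (Fin n),
          ({π ⟨n - 2, by omega⟩, π ⟨n - 1, by omega⟩} : Finset (Fin n)) = S ∧
          ({τ ⟨n - 2, by omega⟩, τ ⟨n - 1, by omega⟩} : Finset (Fin n)) = T ∧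
          (BS n).Adj π τ) ↔ (S ∩ T).card = 1) ∧
      (∀ π τ : Equiv.Perm (Fin n),
          ({π ⟨n - 2, by omega⟩, π ⟨n - 1, by omega⟩} : Finset (Fin n)) = S →
          ({τ ⟨n - 2, by omega⟩, τ ⟨n - 1, by omega⟩} : Finset (Fin n)) = T →
          (BS n).Adj π τ → τ = π * bsGen n (n - 2))) ∧
    Nonempty
      ((SimpleGraph.fromRel (fun A B : {S : Finset (Fin n) // S.card = 2} =>
          ∃ π τ : Equiv.Perm (Fin n),
            ({π ⟨n - 2, by omega⟩, π ⟨n - 1, by omega⟩} : Finset (Fin n)) = A.1 ∧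
            ({τ ⟨n - 2, by omega⟩, τ ⟨n - 1, by omega⟩} : Finset (Fin n)) = B.1 ∧
            (BS n).Adj π τ)) ≃g
        (SimpleGraph.fromRel (fun A B : {S : Finset (Fin n) // S.card = 2} =>
          (A.1 ∩ B.1).card = 1))) := by
  refine ⟨fun S T hS hT hST => bs_key n hn S T hS hT hST, ⟨⟨Equiv.refl _, ?_⟩⟩⟩
  intro A B
  simp only [SimpleGraph.fromRel_adj, Equiv.refl_apply]
  by_cases hAB : A = B
  · subst hAB; simp
  · have hAB1 : A.1 ≠ B.1 := fun h => hAB (Subtype.ext h)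
    have h1 := (bs_key n hn A.1 B.1 A.2 B.2 hAB1).1
    have h2 := (bs_key n hn B.1 A.1 B.2 A.2 hAB1.symm).1
    constructor
    · rintro ⟨hne, h | h⟩
      · exact ⟨hne, Or.inl (h1.mpr h)⟩
      · exact ⟨hne, Or.inr (h2.mpr h)⟩
    · rintro ⟨hne, h | h⟩
      · exact ⟨hne, Or.inl (h1.mp h)⟩
      · exact ⟨hne, Or.inr (h2.mp h)⟩
end
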